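/- Let f be a tower-stable polynomial with integer coefficients, a an integer, p a prime number, and k a positive integer. If p does not divide the mod-p multiplier μ_p of f at a, then ρ_{f,a}(p^k) = ρ_{f,a}(p) and λ_{f,a}(p^k) divides λ_{f,a}(p)·(p − 1)·p^{k−1}. -/

import Mathlib

/-- `σ` is a cyclic permutation of length `p` of its (finite) domain: it is a
bijection and the iterates of some element pass through all elements within
`p` steps. -/
def IsCyclicPermOfLength {F : Type*} (σ : F → F) (p : ℕ) : Prop :=
  Function.Bijective σ ∧ ∃ x : F, ∀ y : F, ∃ i : ℕ, i < p ∧ σ^[i] x = y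

/-- The reduction `f_m : ℤ/mℤ → ℤ/mℤ` of a polynomial `f ∈ ℤ[x]`. -/
def polyRed (f : Polynomial ℤ) (m : ℕ) : ZMod m → ZMod m :=
  fun x => Polynomial.eval₂ (Int.castRingHom (ZMod m)) x f

/-- A polynomial `f ∈ ℤ[x]` is tower-stable if no reduction modulo a prime
`q` is a cyclic permutation of length `q`. -/
def PolyTowerStable (f : Polynomial ℤ) : Prop :=
  ∀ q : ℕ, q.Prime → ¬ IsCyclicPermOfLength (polyRed f q) q

/-- `ρ_{f,a}(n)`: the tail length of the reduction of `f` mod `n` at the class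
of `a`, i.e. the least `k` with `f^{k+l}(a) ≡ f^k(a) (mod n)` for some `l > 0`. -/
noncomputable def polyTail (f : Polynomial ℤ) (a : ℤ) (n : ℕ) : ℕ :=
  sInf {k : ℕ | ∃ l : ℕ, 0 < l ∧
    (n : ℤ) ∣ (fun z => f.eval z)^[k + l] a - (fun z => f.eval z)^[k] a}

/-- `λ_{f,a}(n)`: the cycle length of the reduction of `f` mod `n` at the class
of `a`, i.e. the least `l > 0` with `f^{k+l}(a) ≡ f^k(a) (mod n)` for some `k`. -/
noncomputable def polyCycle (f : Polynomial ℤ) (a : ℤ) (n : ℕ) : ℕ :=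
  sInf {l : ℕ | 0 < l ∧ ∃ k : ℕ,
    (n : ℤ) ∣ (fun z => f.eval z)^[k + l] a - (fun z => f.eval z)^[k] a}

/-- The `m`-th iterate of `f` as a polynomial. -/
noncomputable def polyIter (f : Polynomial ℤ) (m : ℕ) : Polynomial ℤ :=
  (fun q => q.comp f)^[m] Polynomial.X

/-- The mod `p` multiplier `μ_p = (f^{λ(p)})'(f^{ρ(p)}(a))` of `f` at `a`. -/
noncomputable def muP (f : Polynomial ℤ) (a : ℤ) (p : ℕ) : ℤ :=
  (Polynomial.derivative (polyIter f (polyCycle f a p))).eval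
    ((fun z => f.eval z)^[polyTail f a p] a)


section Aux

open Polynomial

lemma polyIter_eval (f : Polynomial ℤ) : ∀ (m : ℕ) (z : ℤ),
    (polyIter f m).eval z = (fun z => f.eval z)^[m] z := by
  intro m
  induction m with
  | zero => intro z; simp [polyIter]
  | succ m ih =>
      intro z
      have h1 : polyIter f (m + 1) = (polyIter f m).comp f := by
        simp only [polyIter, Function.iterate_succ_apply']
      rw [h1, eval_comp, ih, Function.iterate_succ_apply]

lemma dvd_eval_sub {n x y : ℤ} (g : Polynomial ℤ) (h : n ∣ x - y) :
    n ∣ g.eval x - g.eval y :=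
  h.trans (sub_dvd_eval_sub x y g)

lemma dvd_sub_trans {n a b c : ℤ} (h1 : n ∣ a - b) (h2 : n ∣ b - c) : n ∣ a - c := by
  have := dvd_add h1 h2; simpa using this

lemma iter_fix_modEq (h : Polynomial ℤ) {x : ℤ} {n : ℤ} (hx : n ∣ h.eval x - x) :
    ∀ m : ℕ, n ∣ (fun z => h.eval z)^[m] x - x := by
  intro m
  induction m with
  | zero => simp
  | succ m ih =>
      rw [Function.iterate_succ_apply']
      exact dvd_sub_trans (dvd_eval_sub h ih) hx

lemma deriv_iter_modEq (h : Polynomial ℤ) (x : ℤ) (n : ℤ) (hx : n ∣ h.eval x - x) :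
    ∀ m : ℕ, n ∣ (Polynomial.derivative (polyIter h m)).eval x
      - ((Polynomial.derivative h).eval x) ^ m := by
  intro m
  induction m with
  | zero => simp [polyIter]
  | succ m ih =>
      have h1 : polyIter h (m + 1) = (polyIter h m).comp h := by
        simp only [polyIter, Function.iterate_succ_apply']
      rw [h1, derivative_comp, eval_mul, eval_comp]
      have h2 : n ∣ (Polynomial.derivative (polyIter h m)).eval (h.eval x)
          - (Polynomial.derivative (polyIter h m)).eval x :=
        dvd_eval_sub _ hx
      have h3 : n ∣ (Polynomial.derivative (polyIter h m)).eval (h.eval x)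
          - ((Polynomial.derivative h).eval x) ^ m := dvd_sub_trans h2 ih
      have h4 : n ∣ (Polynomial.derivative h).eval x *
          ((Polynomial.derivative (polyIter h m)).eval (h.eval x)
            - ((Polynomial.derivative h).eval x) ^ m) := Dvd.dvd.mul_left h3 _
      have : (Polynomial.derivative h).eval x *
          ((Polynomial.derivative (polyIter h m)).eval (h.eval x)
            - ((Polynomial.derivative h).eval x) ^ m)
          = (Polynomial.derivative h).eval x *
              (Polynomial.derivative (polyIter h m)).eval (h.eval x)
            - ((Polynomial.derivative h).eval x) ^ (m + 1) := by ring
      rw [this] at h4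
      exact h4

/-- Sub-lemma: if `q(x) ≡ x (mod P^k)` and `q'(x) ≡ 1 (mod P)`, then
`q^[j](x) ≡ x + j(q(x)-x) (mod P^(k+1))`. -/
lemma lemN (q : Polynomial ℤ) (x P : ℤ) (k : ℕ) (hk : 1 ≤ k)
    (hq : P ^ k ∣ q.eval x - x) (hd : P ∣ (Polynomial.derivative q).eval x - 1) :
    ∀ j : ℕ, P ^ (k + 1) ∣ (fun z => q.eval z)^[j] x - (x + j * (q.eval x - x)) := by
  intro j
  induction j with
  | zero => simp
  | succ j ih =>
      obtain ⟨s, hs⟩ := ih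
      set t : ℤ := (fun z => q.eval z)^[j] x - x with ht
      have hxt : (fun z => q.eval z)^[j] x = x + t := by ring
      have htk : P ^ k ∣ t := by
        have h1 : P ^ k ∣ (j : ℤ) * (q.eval x - x) := Dvd.dvd.mul_left hq _
        have h2 : P ^ k ∣ P ^ (k + 1) * s :=
          Dvd.dvd.mul_right (pow_dvd_pow P (Nat.le_succ k)) s
        have : t = (j : ℤ) * (q.eval x - x) + P ^ (k + 1) * s := by
          rw [ht]; linarith [hs]
        rw [this]; exact dvd_add h1 h2
      obtain ⟨c, hc⟩ := q.binomExpansion x t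
      have h1 : P ^ (k + 1) ∣ ((Polynomial.derivative q).eval x - 1) * t := by
        rw [pow_succ']
        exact mul_dvd_mul hd htk
      have h2 : P ^ (k + 1) ∣ c * t ^ 2 := by
        have htt : P ^ (k + k) ∣ t ^ 2 := by
          rw [pow_add, sq]; exact mul_dvd_mul htk htk
        exact Dvd.dvd.mul_left ((pow_dvd_pow P (by omega)).trans htt) c
      have h3 : P ^ (k + 1) ∣ t - (j : ℤ) * (q.eval x - x) := ⟨s, by linarith [hs]⟩
      rw [Function.iterate_succ_apply', hxt, hc]
      push_cast
      have hexpr : q.eval x + (Polynomial.derivative q).eval x * t + c * t ^ 2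
          - (x + ((j : ℤ) + 1) * (q.eval x - x))
          = ((Polynomial.derivative q).eval x - 1) * t + c * t ^ 2
            + (t - (j : ℤ) * (q.eval x - x)) := by ring
      rw [hexpr]
      exact dvd_add (dvd_add h1 h2) h3

/-- Main lifting lemma: if `h(x) ≡ x (mod p)` and `h'(x) ≡ 1 (mod p)`, then
`h^[p^K](x) ≡ x (mod p^(K+1))`. -/
lemma lemM (h : Polynomial ℤ) (x : ℤ) (p : ℕ)
    (hx : (p : ℤ) ∣ h.eval x - x) (hd : (p : ℤ) ∣ (Polynomial.derivative h).eval x - 1) :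
    ∀ K : ℕ, (p : ℤ) ^ (K + 1) ∣ (fun z => h.eval z)^[p ^ K] x - x := by
  intro K
  induction K with
  | zero => simpa using hx
  | succ K ih =>
      set q : Polynomial ℤ := polyIter h (p ^ K) with hqdef
      have hqe : ∀ z, q.eval z = (fun z => h.eval z)^[p ^ K] z := fun z => polyIter_eval h _ z
      have hq : (p : ℤ) ^ (K + 1) ∣ q.eval x - x := by rw [hqe]; exact ih
      have hμ1 : (h.derivative.eval x) ≡ 1 [ZMOD (p : ℤ)] :=
        (Int.modEq_iff_dvd.mpr (by simpa using hd)).symm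
      have hqd : (p : ℤ) ∣ (Polynomial.derivative q).eval x - 1 := by
        have h5 := deriv_iter_modEq h x (p : ℤ) hx (p ^ K)
        have h6 : (p : ℤ) ∣ (h.derivative.eval x) ^ (p ^ K) - 1 := by
          have h7 := hμ1.pow (p ^ K)
          rw [one_pow] at h7
          exact Int.ModEq.dvd h7.symm
        exact dvd_sub_trans h5 h6
      have hN := lemN q x (p : ℤ) (K + 1) (by omega) hq hqd p
      have hp1 : (p : ℤ) ^ (K + 2) ∣ (p : ℤ) * (q.eval x - x) := by
        rw [pow_succ']
        exact mul_dvd_mul_left _ hq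
      have hfun : (fun z => q.eval z) = (fun z => h.eval z)^[p ^ K] := funext hqe
      have key : (p : ℤ) ^ (K + 2) ∣ (fun z => q.eval z)^[p] x - x := by
        have : (fun z => q.eval z)^[p] x - x
            = ((fun z => q.eval z)^[p] x - (x + (p : ℤ) * (q.eval x - x)))
              + (p : ℤ) * (q.eval x - x) := by ring
        rw [this]
        exact dvd_add hN hp1
      have hiter : (fun z => q.eval z)^[p] x = (fun z => h.eval z)^[p ^ (K + 1)] x := by
        rw [hfun, ← Function.iterate_mul, pow_succ]
      rw [← hiter]
      exact key

section Orbit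

variable (f : Polynomial ℤ) (a : ℤ)

/-- The orbit sequence. -/
noncomputable def orb (i : ℕ) : ℤ := (fun z => f.eval z)^[i] a

lemma orbit_pigeonhole (n : ℕ) (hn : n ≠ 0) :
    ∃ k l : ℕ, 0 < l ∧ (n : ℤ) ∣ orb f a (k + l) - orb f a k := by
  haveI : NeZero n := ⟨hn⟩
  obtain ⟨i, j, hij, hmap⟩ :=
    Finite.exists_ne_map_eq_of_infinite (fun i : ℕ => ((orb f a i : ℤ) : ZMod n))
  rcases hij.lt_or_gt with h | h
  · refine ⟨i, j - i, by omega, ?_⟩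
    have : i + (j - i) = j := by omega
    rw [this]
    exact Int.ModEq.dvd ((ZMod.intCast_eq_intCast_iff _ _ _).mp hmap)
  · refine ⟨j, i - j, by omega, ?_⟩
    have : j + (i - j) = i := by omega
    rw [this]
    exact Int.ModEq.dvd ((ZMod.intCast_eq_intCast_iff _ _ _).mp hmap.symm)

lemma per_forward {n : ℤ} {k0 l : ℕ} (h : n ∣ orb f a (k0 + l) - orb f a k0) :
    ∀ k, k0 ≤ k → n ∣ orb f a (k + l) - orb f a k := by
  intro k hk
  induction k, hk using Nat.le_induction with
  | base => exact h
  | succ k hk ih =>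
      have h1 : orb f a (k + 1 + l) = f.eval (orb f a (k + l)) := by
        have : k + 1 + l = (k + l) + 1 := by omega
        rw [this]; simp [orb, Function.iterate_succ_apply']
      have h2 : orb f a (k + 1) = f.eval (orb f a k) := by
        simp [orb, Function.iterate_succ_apply']
      rw [h1, h2]
      exact dvd_eval_sub f ih

lemma per_mult {n : ℤ} {K l : ℕ} (h : ∀ k, K ≤ k → n ∣ orb f a (k + l) - orb f a k) :
    ∀ j k, K ≤ k → n ∣ orb f a (k + j * l) - orb f a k := by
  intro j
  induction j with
  | zero => intro k _; simp
  | succ j ih =>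
      intro k hk
      have h1 : n ∣ orb f a ((k + j * l) + l) - orb f a (k + j * l) :=
        h (k + j * l) (by omega)
      have h2 : (k + j * l) + l = k + (j + 1) * l := by ring
      rw [h2] at h1
      exact dvd_sub_trans h1 (ih k hk)

/-- Minimality: the cycle length divides every period length. -/
lemma cycle_dvd (n : ℕ) {l : ℕ} (hl : 0 < l)
    (hw : ∃ k, (n : ℤ) ∣ orb f a (k + l) - orb f a k) :
    polyCycle f a n ∣ l := by
  classical
  set C : Set ℕ := {l : ℕ | 0 < l ∧ ∃ k : ℕ,
    (n : ℤ) ∣ (fun z => f.eval z)^[k + l] a - (fun z => f.eval z)^[k] a} with hC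
  have hCl : l ∈ C := ⟨hl, hw⟩
  have hCne : C.Nonempty := ⟨l, hCl⟩
  have hmem : polyCycle f a n ∈ C := Nat.sInf_mem hCne
  obtain ⟨hlampos2, k2, hk2⟩ := hmem
  obtain ⟨k1, hk1⟩ := hw
  set Per : ℕ → Prop := fun m => ∃ K, ∀ k, K ≤ k → (n : ℤ) ∣ orb f a (k + m) - orb f a k
    with hPer
  have per0 : Per 0 := ⟨0, fun k _ => by simp⟩
  have perAdd : ∀ m m', Per m → Per m' → Per (m + m') := by
    rintro m m' ⟨K1, h1⟩ ⟨K2, h2⟩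
    refine ⟨max K1 K2, fun k hk => ?_⟩
    have ha : (n : ℤ) ∣ orb f a ((k + m') + m) - orb f a (k + m') :=
      h1 (k + m') (by omega)
    have hb : (n : ℤ) ∣ orb f a (k + m') - orb f a k := h2 k (by omega)
    have he : (k + m') + m = k + (m + m') := by omega
    rw [he] at ha
    exact dvd_sub_trans ha hb
  have perSub : ∀ m m', m' ≤ m → Per m → Per m' → Per (m - m') := by
    rintro m m' hmm ⟨K1, h1⟩ ⟨K2, h2⟩
    refine ⟨max K1 K2, fun k hk => ?_⟩
    have ha : (n : ℤ) ∣ orb f a ((k + (m - m')) + m') - orb f a (k + (m - m')) :=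
      h2 (k + (m - m')) (by omega)
    have he : (k + (m - m')) + m' = k + m := by omega
    rw [he] at ha
    have hb : (n : ℤ) ∣ orb f a (k + m) - orb f a k := h1 k (by omega)
    have : orb f a (k + (m - m')) - orb f a k
        = (orb f a (k + m) - orb f a k) - (orb f a (k + m) - orb f a (k + (m - m'))) := by
      ring
    rw [this]
    exact dvd_sub hb ha
  have perMul : ∀ m q, Per m → Per (m * q) := by
    intro m q hm
    induction q with
    | zero => simpa using per0
    | succ q ih =>
        have := perAdd _ _ ih hm
        have he : m * q + m = m * (q + 1) := by ring
        rwa [he] at this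
  have perGcd : ∀ m1 m2, Per m1 → Per m2 → Per (Nat.gcd m1 m2) := by
    intro m1 m2
    induction m1, m2 using Nat.gcd.induction with
    | H0 n' => intro _ h; simpa using h
    | H1 m' n' hm' ih =>
        intro h1 h2
        rw [Nat.gcd_rec]
        refine ih ?_ h1
        have : n' % m' = n' - m' * (n' / m') :=
          Nat.eq_sub_of_add_eq (Nat.mod_add_div n' m')
        rw [this]
        exact perSub _ _ (Nat.mul_div_le n' m') h2 (perMul _ _ h1)
  have hperl : Per l := ⟨k1, per_forward f a hk1⟩
  have hperlam2 : Per (polyCycle f a n) := ⟨k2, per_forward f a hk2⟩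
  obtain ⟨K, hK⟩ := perGcd _ _ hperlam2 hperl
  have hgpos : 0 < Nat.gcd (polyCycle f a n) l := Nat.gcd_pos_of_pos_left _ hlampos2
  have hgC : Nat.gcd (polyCycle f a n) l ∈ C := ⟨hgpos, K, hK K le_rfl⟩
  have hle : polyCycle f a n ≤ Nat.gcd (polyCycle f a n) l := Nat.sInf_le hgC
  have hge : Nat.gcd (polyCycle f a n) l ≤ polyCycle f a n :=
    Nat.le_of_dvd hlampos2 (Nat.gcd_dvd_left _ _)
  have heq : Nat.gcd (polyCycle f a n) l = polyCycle f a n := le_antisymm hge hle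
  rw [← heq]
  exact Nat.gcd_dvd_right _ _

/-- Joint achievement: `f^[ρ+λ](a) ≡ f^[ρ](a) (mod n)`. -/
lemma tail_cycle_joint (n : ℕ)
    (hne : ∃ k l : ℕ, 0 < l ∧ (n : ℤ) ∣ orb f a (k + l) - orb f a k) :
    (n : ℤ) ∣ orb f a (polyTail f a n + polyCycle f a n) - orb f a (polyTail f a n) := by
  classical
  obtain ⟨k0, l0', hl0', hd0⟩ := hne
  set T : Set ℕ := {k : ℕ | ∃ l : ℕ, 0 < l ∧
    (n : ℤ) ∣ (fun z => f.eval z)^[k + l] a - (fun z => f.eval z)^[k] a} with hT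
  have hTne : T.Nonempty := ⟨k0, l0', hl0', hd0⟩
  have hρ : polyTail f a n ∈ T := Nat.sInf_mem hTne
  obtain ⟨l0, hl0, hdρ⟩ := hρ
  set ρ := polyTail f a n with hρdef
  set lam := polyCycle f a n with hlamdef
  have hCne : ({l : ℕ | 0 < l ∧ ∃ k : ℕ,
      (n : ℤ) ∣ (fun z => f.eval z)^[k + l] a - (fun z => f.eval z)^[k] a} : Set ℕ).Nonempty :=
    ⟨l0, hl0, ρ, hdρ⟩
  have hlam : lam ∈ {l : ℕ | 0 < l ∧ ∃ k : ℕ,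
      (n : ℤ) ∣ (fun z => f.eval z)^[k + l] a - (fun z => f.eval z)^[k] a} :=
    Nat.sInf_mem hCne
  obtain ⟨hlampos, k2, hk2⟩ := hlam
  have hperl0 : ∀ k, ρ ≤ k → (n : ℤ) ∣ orb f a (k + l0) - orb f a k :=
    per_forward f a hdρ
  have hmult : ∀ j k, ρ ≤ k → (n : ℤ) ∣ orb f a (k + j * l0) - orb f a k :=
    per_mult f a hperl0
  have hperlam : ∀ k, k2 ≤ k → (n : ℤ) ∣ orb f a (k + lam) - orb f a k :=
    per_forward f a hk2
  have hB : (n : ℤ) ∣ orb f a ((ρ + lam) + k2 * l0) - orb f a (ρ + lam) :=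
    hmult k2 (ρ + lam) (by omega)
  have hCc : (n : ℤ) ∣ orb f a ((ρ + k2 * l0) + lam) - orb f a (ρ + k2 * l0) :=
    hperlam (ρ + k2 * l0) (by nlinarith [hl0])
  have hD : (n : ℤ) ∣ orb f a (ρ + k2 * l0) - orb f a ρ := hmult k2 ρ le_rfl
  have he : (ρ + lam) + k2 * l0 = (ρ + k2 * l0) + lam := by omega
  rw [he] at hB
  have h1 : (n : ℤ) ∣ orb f a ((ρ + k2 * l0) + lam) - orb f a ρ := dvd_sub_trans hCc hD
  have : orb f a (ρ + lam) - orb f a ρ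
      = (orb f a ((ρ + k2 * l0) + lam) - orb f a ρ)
        - (orb f a ((ρ + k2 * l0) + lam) - orb f a (ρ + lam)) := by ring
  rw [this]
  exact dvd_sub h1 hB

end Orbit

theorem stmt_16' (f : Polynomial ℤ) (a : ℤ)
    (p : ℕ) (hp : p.Prime) (k : ℕ) (hk : 0 < k)
    (hmu : ¬ (p : ℤ) ∣ muP f a p) :
    polyTail f a (p ^ k) = polyTail f a p ∧
      polyCycle f a (p ^ k) ∣ polyCycle f a p * (p - 1) * p ^ (k - 1) := by
  classical
  haveI : Fact p.Prime := ⟨hp⟩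
  have hp0 : p ≠ 0 := hp.pos.ne'
  have hne := orbit_pigeonhole f a p hp0
  set ρ := polyTail f a p with hρdef
  set lam := polyCycle f a p with hlamdef
  set x : ℤ := (fun z => f.eval z)^[ρ] a with hxdef
  have hxorb : x = orb f a ρ := rfl
  -- positivity of lam
  obtain ⟨kw, lw, hlw, hdw⟩ := hne
  have hlampos : 0 < lam := by
    have hmem : lam ∈ {l : ℕ | 0 < l ∧ ∃ k : ℕ,
        (p : ℤ) ∣ (fun z => f.eval z)^[k + l] a - (fun z => f.eval z)^[k] a} :=
      Nat.sInf_mem ⟨lw, hlw, kw, hdw⟩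
    exact hmem.1
  have hjoint : (p : ℤ) ∣ orb f a (ρ + lam) - orb f a ρ :=
    tail_cycle_joint f a p ⟨kw, lw, hlw, hdw⟩
  set g : Polynomial ℤ := polyIter f lam with hgdef
  have hgx0 : g.eval x = orb f a (ρ + lam) := by
    rw [hgdef, polyIter_eval, hxdef]
    show (fun z => f.eval z)^[lam] ((fun z => f.eval z)^[ρ] a) = orb f a (ρ + lam)
    rw [← Function.iterate_add_apply]
    show orb f a (lam + ρ) = orb f a (ρ + lam)
    congr 1; omega
  have hgx : (p : ℤ) ∣ g.eval x - x := by rw [hgx0, hxorb]; exact hjoint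
  have hmu2 : ¬ (p : ℤ) ∣ (Polynomial.derivative g).eval x := hmu
  -- the multiplier as a unit mod p
  have hμ0 : (((Polynomial.derivative g).eval x : ℤ) : ZMod p) ≠ 0 := by
    intro h
    exact hmu2 ((ZMod.intCast_zmod_eq_zero_iff_dvd _ p).mp h)
  have hU : IsUnit (((Polynomial.derivative g).eval x : ℤ) : ZMod p) :=
    isUnit_iff_ne_zero.mpr hμ0
  set d := orderOf hU.unit with hddef
  have hdpos : 0 < d := orderOf_pos hU.unit
  have hd1 : d ∣ p - 1 := by
    rw [hddef, ← ZMod.card_units p]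
    exact orderOf_dvd_card
  have hμd : (p : ℤ) ∣ ((Polynomial.derivative g).eval x) ^ d - 1 := by
    rw [← ZMod.intCast_zmod_eq_zero_iff_dvd]
    push_cast
    rw [← hU.unit_spec, ← Units.val_pow_eq_pow_val, pow_orderOf_eq_one]
    simp
  set h : Polynomial ℤ := polyIter g d with hhdef
  have hhx : (p : ℤ) ∣ h.eval x - x := by
    rw [hhdef, polyIter_eval]
    exact iter_fix_modEq g hgx d
  have hhd : (p : ℤ) ∣ (Polynomial.derivative h).eval x - 1 :=
    dvd_sub_trans (deriv_iter_modEq g x (p : ℤ) hgx d) hμd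
  have hmain0 := lemM h x p hhx hhd (k - 1)
  rw [Nat.sub_add_cancel hk] at hmain0
  -- identify the iterate
  set L : ℕ := lam * d * p ^ (k - 1) with hLdef
  have hHfun : (fun z => h.eval z) = (fun z => f.eval z)^[lam * d] := by
    funext z
    rw [hhdef, polyIter_eval]
    have hgfun : (fun z => g.eval z) = (fun z => f.eval z)^[lam] := by
      funext w; rw [hgdef, polyIter_eval]
    rw [hgfun, ← Function.iterate_mul]
  have hLiter : (fun z => h.eval z)^[p ^ (k - 1)] x = orb f a (ρ + L) := by
    rw [hHfun, ← Function.iterate_mul, hxdef]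
    show (fun z => f.eval z)^[lam * d * p ^ (k - 1)] ((fun z => f.eval z)^[ρ] a)
      = orb f a (ρ + L)
    rw [← Function.iterate_add_apply]
    show orb f a (lam * d * p ^ (k - 1) + ρ) = orb f a (ρ + L)
    congr 1
    rw [hLdef]; omega
  have hmain : ((p ^ k : ℕ) : ℤ) ∣ orb f a (ρ + L) - orb f a ρ := by
    rw [← hLiter, ← hxorb]
    push_cast
    exact hmain0
  have hLpos : 0 < L := by
    have : 0 < p ^ (k - 1) := Nat.pow_pos hp.pos
    positivity
  -- tail equality
  have hρmem : ρ ∈ {k' : ℕ | ∃ l : ℕ, 0 < l ∧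
      ((p ^ k : ℕ) : ℤ) ∣ (fun z => f.eval z)^[k' + l] a - (fun z => f.eval z)^[k'] a} :=
    ⟨L, hLpos, hmain⟩
  have htail_le : polyTail f a (p ^ k) ≤ ρ := Nat.sInf_le hρmem
  have htail_ge : ρ ≤ polyTail f a (p ^ k) := by
    have hmem2 := Nat.sInf_mem (⟨ρ, hρmem⟩ : Set.Nonempty {k' : ℕ | ∃ l : ℕ, 0 < l ∧
      ((p ^ k : ℕ) : ℤ) ∣ (fun z => f.eval z)^[k' + l] a - (fun z => f.eval z)^[k'] a})
    obtain ⟨l', hl', hdvd'⟩ := hmem2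
    have hpk : (p : ℤ) ∣ ((p ^ k : ℕ) : ℤ) := by
      push_cast
      exact dvd_pow_self (p : ℤ) hk.ne'
    exact Nat.sInf_le ⟨l', hl', hpk.trans hdvd'⟩
  refine ⟨le_antisymm htail_le htail_ge, ?_⟩
  have hcyc : polyCycle f a (p ^ k) ∣ L :=
    cycle_dvd f a (p ^ k) hLpos ⟨ρ, hmain⟩
  refine hcyc.trans ?_
  rw [hLdef]
  exact mul_dvd_mul (mul_dvd_mul_left lam hd1) dvd_rfl

end Aux

theorem stmt_16 (f : Polynomial ℤ) (hts : PolyTowerStable f) (a : ℤ)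
    (p : ℕ) (hp : p.Prime) (k : ℕ) (hk : 0 < k)
    (hmu : ¬ (p : ℤ) ∣ muP f a p) :
    polyTail f a (p ^ k) = polyTail f a p ∧
      polyCycle f a (p ^ k) ∣ polyCycle f a p * (p - 1) * p ^ (k - 1) := by
  exact stmt_16' f a p hp k hk hmu
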